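/- Let D be a weighted directed graph whose arc weights are elements of a cost set C with total order ⪯ and combination ⊕ satisfying right-isotonicity, and suppose every arc weight c in D satisfies d ⪯ d ⊕ c for all d ∈ C (C-non-negativity). Then for every walk W from a node u in a source set S to a node v, there exists a path P from u to v with γ^D(B', P) ⪯ γ^D(B', W), where γ^D(B', W) is the cost of the walk starting from initial cost B'[u] and combining arc weights left-to-right via ⊕. -/

import Mathlib

/-- `ArcsFrom u v l`: the list of weighted arcs `l` forms a walk from `u` to `v`
(consecutive arcs chain head to tail; the empty walk requires `u = v`). -/
def ArcsFrom {V C : Type*} : V → V → List (V × V × C) → Prop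
  | u, v, [] => u = v
  | u, v, a :: l => a.1 = u ∧ ArcsFrom a.2.1 v l

/-- Cost of a walk: combine arc weights left-to-right starting from `b`. -/
def walkCostD {V C : Type*} (comb : C → C → C) (b : C) (l : List (V × V × C)) : C :=
  l.foldl (fun c a => comb c a.2.2) b

section Aux
variable {V C : Type*} (comb : C → C → C) (le : C → C → Prop)

lemma wc_cons (b : C) (a : V × V × C) (l : List (V × V × C)) :
    walkCostD comb b (a :: l) = walkCostD comb (comb b a.2.2) l := rfl

lemma wc_append (b : C) (l₁ l₂ : List (V × V × C)) :
    walkCostD comb b (l₁ ++ l₂) = walkCostD comb (walkCostD comb b l₁) l₂ := by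
  simp [walkCostD, List.foldl_append]

lemma foldl_mono (hiso : ∀ c₁ c₂ c, le c₁ c₂ → le (comb c₁ c) (comb c₂ c)) :
    ∀ (l : List (V × V × C)) (b b' : C), le b b' →
      le (walkCostD comb b l) (walkCostD comb b' l)
  | [], b, b', h => h
  | a :: l, b, b', h => by
      rw [wc_cons, wc_cons]
      exact foldl_mono hiso l _ _ (hiso _ _ _ h)

lemma foldl_nonneg (hord : IsLinearOrder C le) {A : Set (V × V × C)}
    (hnn : ∀ a ∈ A, ∀ d, le d (comb d a.2.2)) :
    ∀ (l : List (V × V × C)), (∀ a ∈ l, a ∈ A) → ∀ b, le b (walkCostD comb b l)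
  | [], _, b => hord.toIsPartialOrder.toIsPreorder.toRefl.refl b
  | a :: l, hA, b => by
      rw [wc_cons]
      exact hord.toIsPartialOrder.toIsPreorder.toIsTrans.trans _ _ _
        (hnn a (hA a (by simp)) b)
        (foldl_nonneg hord hnn l (fun x hx => hA x (by simp [hx])) _)

lemma arcs_split {x : V} :
    ∀ (P : List (V × V × C)) (u v : V), x ∈ P.map (fun a => a.2.1) → ArcsFrom u v P →
      ∃ P₁ P₂, P = P₁ ++ P₂ ∧ ArcsFrom u x P₁ ∧ ArcsFrom x v P₂ ∧ P₂.length < P.length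
  | [], u, v, hx, _ => by simp at hx
  | a :: P, u, v, hx, h => by
      obtain ⟨ha, hP⟩ := h
      by_cases hax : a.2.1 = x
      · exact ⟨[a], P, rfl, ⟨ha, hax⟩, hax ▸ hP, by simp⟩
      · have hx' : x ∈ P.map (fun a => a.2.1) := by
          rw [List.map_cons] at hx
          rcases List.mem_cons.mp hx with h | h
          · exact absurd h.symm hax
          · exact h
        obtain ⟨P₁, P₂, heq, h1, h2, hlen⟩ := arcs_split P a.2.1 v hx' hP
        exact ⟨a :: P₁, P₂, by simp [heq], ⟨ha, h1⟩, h2, by simp; omega⟩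

lemma main_lemma (hord : IsLinearOrder C le)
    (hiso : ∀ c₁ c₂ c, le c₁ c₂ → le (comb c₁ c) (comb c₂ c))
    {A : Set (V × V × C)} (hnn : ∀ a ∈ A, ∀ d, le d (comb d a.2.2)) :
    ∀ (n : ℕ) (W : List (V × V × C)), W.length ≤ n → ∀ (u v : V) (b : C),
      (∀ a ∈ W, a ∈ A) → ArcsFrom u v W →
      ∃ P : List (V × V × C), (∀ a ∈ P, a ∈ A) ∧ ArcsFrom u v P ∧
        (u :: P.map (fun a => a.2.1)).Nodup ∧
        le (walkCostD comb b P) (walkCostD comb b W) ∧ P.length ≤ W.length := by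
  have hrefl := hord.toIsPartialOrder.toIsPreorder.toRefl.refl
  have htrans := hord.toIsPartialOrder.toIsPreorder.toIsTrans.trans
  intro n
  induction n with
  | zero =>
    intro W hlen u v b _ hW
    have : W = [] := List.length_eq_zero_iff.mp (Nat.le_zero.mp hlen)
    subst this
    exact ⟨[], by simp, hW, by simp, hrefl b, le_refl 0⟩
  | succ n ih =>
    intro W hlen u v b hWA hW
    match W with
    | [] => exact ⟨[], by simp, hW, by simp, hrefl b, Nat.zero_le _⟩
    | a :: W' =>
      obtain ⟨ha, hW'⟩ := hW
      have hlen' : W'.length ≤ n := by simpa using hlen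
      have haA : a ∈ A := hWA a (by simp)
      have hW'A : ∀ x ∈ W', x ∈ A := fun x hx => hWA x (by simp [hx])
      -- le b (comb b a.2.2)
      have hb : le b (comb b a.2.2) := hnn a haA b
      obtain ⟨P', hP'A, hP'arcs, hP'nd, hP'le, hP'len⟩ :=
        ih W' hlen' a.2.1 v (comb b a.2.2) hW'A hW'
      by_cases hmem : u ∈ a.2.1 :: P'.map (fun x => x.2.1)
      · rcases List.mem_cons.mp hmem with hcase | hcase
        · -- u = a.2.1 : drop the first arc, recurse on W'
          obtain ⟨Q, hQA, hQarcs, hQnd, hQle, hQlen⟩ :=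
            ih W' hlen' u v b hW'A (hcase ▸ hW')
          refine ⟨Q, hQA, hQarcs, hQnd, ?_, by simpa using Nat.le_succ_of_le hQlen⟩
          refine htrans _ _ _ hQle ?_
          rw [wc_cons]
          exact foldl_mono comb le hiso W' b (comb b a.2.2) hb
        · -- u appears strictly inside P'
          obtain ⟨P₁, P₂, heq, _, h2, hltlen⟩ :=
            arcs_split P' a.2.1 v hcase hP'arcs
          have hlen₂ : P₂.length ≤ n := by omega
          have hP₂A : ∀ x ∈ P₂, x ∈ A := fun x hx => hP'A x (by simp [heq, hx])
          obtain ⟨Q, hQA, hQarcs, hQnd, hQle, hQlen⟩ :=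
            ih P₂ hlen₂ u v b hP₂A h2
          refine ⟨Q, hQA, hQarcs, hQnd, ?_, by simp; omega⟩
          refine htrans _ _ _ hQle ?_
          have h1 : le b (walkCostD comb (comb b a.2.2) P₁) :=
            htrans _ _ _ hb
              (foldl_nonneg comb le hord hnn P₁
                (fun x hx => hP'A x (by simp [heq, hx])) _)
          have h2' : le (walkCostD comb b P₂) (walkCostD comb (comb b a.2.2) P') := by
            rw [heq, wc_append]
            exact foldl_mono comb le hiso P₂ _ _ h1
          refine htrans _ _ _ h2' ?_
          rw [wc_cons]
          exact hP'le
      · -- no repetition: prepend the arc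
        refine ⟨a :: P', fun x hx => ?_, ⟨ha, hP'arcs⟩, ?_, ?_, by simpa using hP'len⟩
        · rcases List.mem_cons.mp hx with h | h
          · exact h ▸ haA
          · exact hP'A x h
        · simpa using List.Nodup.cons (by simpa using hmem) hP'nd
        · rw [wc_cons, wc_cons]
          exact hP'le

end Aux

/-- In a weighted digraph over a cost set `(C, ⊕, ⪯)` with `⪯` a total order
satisfying right-isotonicity, if every arc weight is `C`-non-negative, then every walk
`W` from a source node `u ∈ S` to `v` can be replaced by a path `P` (no repeated node)
from `u` to `v` with `γ^D(B', P) ⪯ γ^D(B', W)`. -/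
theorem walk_to_path_cost {V C : Type*} (comb : C → C → C) (le : C → C → Prop)
    (hord : IsLinearOrder C le)
    (hiso : ∀ c₁ c₂ c, le c₁ c₂ → le (comb c₁ c) (comb c₂ c))
    (A : Set (V × V × C))
    (hnn : ∀ a ∈ A, ∀ d, le d (comb d a.2.2))
    (S : Set V) (B' : V → C) (u v : V) (hu : u ∈ S)
    (W : List (V × V × C)) (hWA : ∀ a ∈ W, a ∈ A) (hW : ArcsFrom u v W) :
    ∃ P : List (V × V × C), (∀ a ∈ P, a ∈ A) ∧ ArcsFrom u v P ∧
      (u :: P.map (fun a => a.2.1)).Nodup ∧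
      le (walkCostD comb (B' u) P) (walkCostD comb (B' u) W) := by
  obtain ⟨P, h1, h2, h3, h4, _⟩ :=
    main_lemma comb le hord hiso hnn W.length W le_rfl u v (B' u) hWA hW
  exact ⟨P, h1, h2, h3, h4⟩
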